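/- Consider the Interaction 2 guiding system F : {(Σ,Ω) : Σ² ≠ 1} → ℝ², F(Σ,Ω) = ((3/2)·Σ·(−γ(Σ²+Ω²−1)+2Σ²+Ω²−2), (1/2)·Ω·(Γ̄·(Σ²+Ω²−1)/(Σ²−1) − 3γ(Σ²+Ω²−1) + 6Σ² + 3Ω² − 3)), with parameters γ ∈ [0,2] and Γ̄ ∈ ℝ. Then (0,0) is an equilibrium point, the Jacobian matrix of F at (0,0) is the diagonal matrix with diagonal entries 3(γ−2)/2 and (Γ̄+3γ−3)/2, and both entries are negative if and only if 0 ≤ γ < 2 and Γ̄ < −3(γ−1) (so (0,0) is a hyperbolic sink exactly under these conditions). -/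

import Mathlib

/-- Interaction 2 guiding system: `(0,0)` is an equilibrium, its Jacobian is
`diag(3(γ−2)/2, (Γ̄+3γ−3)/2)`, and both eigenvalues are negative iff
`0 ≤ γ < 2` and `Γ̄ < −3(γ−1)` (hyperbolic sink exactly then). -/
theorem interaction2_origin_equilibrium_stability
    (γ Γ : ℝ) (hγ0 : 0 ≤ γ) (hγ2 : γ ≤ 2)
    (F : ℝ × ℝ → ℝ × ℝ)
    (hF : ∀ p : ℝ × ℝ, F p =
      ((3 / 2) * p.1 * (-γ * (p.1 ^ 2 + p.2 ^ 2 - 1) + 2 * p.1 ^ 2 + p.2 ^ 2 - 2),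
       (1 / 2) * p.2 * (Γ * (p.1 ^ 2 + p.2 ^ 2 - 1) / (p.1 ^ 2 - 1)
         - 3 * γ * (p.1 ^ 2 + p.2 ^ 2 - 1) + 6 * p.1 ^ 2 + 3 * p.2 ^ 2 - 3))) :
    F (0, 0) = (0, 0) ∧
    HasFDerivAt F
      (((3 * (γ - 2) / 2) • ContinuousLinearMap.id ℝ ℝ).prodMap
        (((Γ + 3 * γ - 3) / 2) • ContinuousLinearMap.id ℝ ℝ)) (0, 0) ∧
    ((3 * (γ - 2) / 2 < 0 ∧ (Γ + 3 * γ - 3) / 2 < 0) ↔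
      (0 ≤ γ ∧ γ < 2 ∧ Γ < -3 * (γ - 1))) := by
  refine ⟨by rw [hF]; norm_num, ?_, ?_⟩
  · have hfun : F = fun p : ℝ × ℝ =>
      ((3 / 2) * p.1 * (-γ * (p.1 ^ 2 + p.2 ^ 2 - 1) + 2 * p.1 ^ 2 + p.2 ^ 2 - 2),
       (1 / 2) * p.2 * (Γ * (p.1 ^ 2 + p.2 ^ 2 - 1) / (p.1 ^ 2 - 1)
         - 3 * γ * (p.1 ^ 2 + p.2 ^ 2 - 1) + 6 * p.1 ^ 2 + 3 * p.2 ^ 2 - 3)) := funext hF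
    rw [hfun]
    have hx : HasFDerivAt (fun p : ℝ × ℝ => p.1) (ContinuousLinearMap.fst ℝ ℝ ℝ)
        ((0 : ℝ), (0 : ℝ)) := hasFDerivAt_fst
    have hy : HasFDerivAt (fun p : ℝ × ℝ => p.2) (ContinuousLinearMap.snd ℝ ℝ ℝ)
        ((0 : ℝ), (0 : ℝ)) := hasFDerivAt_snd
    have hx2' := hx.mul hx
    have hy2' := hy.mul hy
    simp only [← pow_two] at hx2' hy2'
    have hx2 := hx2'
    have hy2 := hy2'
    have hs := (hx2.add hy2).sub_const 1
    have hden := hx2.sub_const 1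
    have hden0 : ((0 : ℝ), (0 : ℝ)).1 ^ 2 - 1 ≠ 0 := by norm_num
    have hnum := hs.const_mul Γ
    have hinv := (hasFDerivAt_inv hden0).comp ((0 : ℝ), (0 : ℝ)) hden
    have hquot := hnum.mul hinv
    simp only [← div_eq_mul_inv] at hquot
    have hg1 := ((((hs.const_mul (-γ)).add (hx2.const_mul 2)).add hy2).sub_const 2)
    have hg2 := (((hquot.sub (hs.const_mul (3 * γ))).add (hx2.const_mul 6)).add
      (hy2.const_mul 3)).sub_const 3
    have hf1 := (hx.const_mul (3 / 2)).mul hg1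
    have hf2 := (hy.const_mul (1 / 2)).mul hg2
    have : HasFDerivAt _ _ ((0 : ℝ), (0 : ℝ)) := HasFDerivAt.prodMk hf1 hf2
    refine this.congr_fderiv ?_
    refine ContinuousLinearMap.ext fun q => ?_
    refine Prod.ext ?_ ?_ <;> simp <;> ring
  · constructor
    · rintro ⟨h1, h2⟩
      exact ⟨hγ0, by linarith, by linarith⟩
    · rintro ⟨-, h1, h2⟩
      exact ⟨by linarith, by linarith⟩
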